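/- Let A be a non-empty finite subset of ℤ. For every x ∈ ℤ, the quantity g_A(x,y) + a(x−y) − E_x[a(S_{σ_A} − y)] is independent of y ∈ ℤ; in particular, for any ξ0 ∈ A it equals a†(x−ξ0) − E_x[a(S_{σ_A} − ξ0)]. -/

import Mathlib

open Filter
open scoped Topology Classical

noncomputable section
set_option linter.unusedSectionVars false
set_option linter.unusedVariables false
set_option maxHeartbeats 1000000
open scoped ENNReal

/-- `convP p n x` : the `n`-step transition probability `P₀[Sₙ = x]` of the random walk
with step distribution `p`. -/
def convP (p : ℤ → ℝ) : ℕ → ℤ → ℝ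
  | 0, x => if x = 0 then 1 else 0
  | n + 1, x => ∑' z : ℤ, convP p n z * p (x - z)

/-- `kp p A n x y = P_x[Sₖ ∉ A for 1 ≤ k ≤ n, Sₙ = y]` : the transition probability of the
walk killed upon entering `A`. -/
def kp (p : ℤ → ℝ) (A : Set ℤ) : ℕ → ℤ → ℤ → ℝ
  | 0, x, y => if x = y then 1 else 0
  | n + 1, x, y => ∑' z : ℤ, if z ∈ A then 0 else p (z - x) * kp p A n z y

/-- The Green function `g_A(x,y) = Σ_n p_A^n(x,y)` of the killed walk. -/
def greenFn (p : ℤ → ℝ) (A : Set ℤ) (x y : ℤ) : ℝ := ∑' n : ℕ, kp p A n x y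

/-- `hitAt p A n x ξ = P_x[σ_A = n, S_{σ_A} = ξ]`. -/
def hitAt (p : ℤ → ℝ) (A : Set ℤ) : ℕ → ℤ → ℤ → ℝ
  | 0, _, _ => 0
  | n + 1, x, ξ => if ξ ∈ A then ∑' w : ℤ, kp p A n x w * p (ξ - w) else 0

/-- `hitDist p A x ξ = P_x[S_{σ_A} = ξ]`, where `σ_A` is the first entrance time into `A`. -/
def hitDist (p : ℤ → ℝ) (A : Set ℤ) (x ξ : ℤ) : ℝ := ∑' n : ℕ, hitAt p A n x ξ

/-- `probHitAt p A n x = P_x[σ_A = n]`. -/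
def probHitAt (p : ℤ → ℝ) (A : Set ℤ) (n : ℕ) (x : ℤ) : ℝ := ∑' ξ : ℤ, hitAt p A n x ξ

/-- `entBeforeAt p A B n x z = P_x[σ_B = n < σ_A, S_{σ_B} = z]`. -/
def entBeforeAt (p : ℤ → ℝ) (A B : Set ℤ) : ℕ → ℤ → ℤ → ℝ
  | 0, _, _ => 0
  | n + 1, x, z => if z ∈ B \ A then ∑' w : ℤ, kp p (A ∪ B) n x w * p (z - w) else 0

/-- `entBefore p A B x z = P_x[σ_B < σ_A, S_{σ_B} = z]`. -/
def entBefore (p : ℤ → ℝ) (A B : Set ℤ) (x z : ℤ) : ℝ := ∑' n : ℕ, entBeforeAt p A B n x z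

/-- `probBefore p A B x = P_x[σ_B < σ_A]`. -/
def probBefore (p : ℤ → ℝ) (A B : Set ℤ) (x : ℤ) : ℝ := ∑' z : ℤ, entBefore p A B x z

/-- The reflected set `-A = {-z : z ∈ A}`. -/
def negS (A : Set ℤ) : Set ℤ := {z : ℤ | -z ∈ A}

/-- `a†(x) = δ_{x,0} + a(x)`. -/
def adag (a : ℤ → ℝ) (x : ℤ) : ℝ := (if x = 0 then 1 else 0) + a x

/-- `a` is the potential function of the walk:
`a(x) = lim_n Σ_{k=0}^n [p^k(0) - p^k(-x)]`. -/
def IsPotential (p : ℤ → ℝ) (a : ℤ → ℝ) : Prop :=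
  ∀ x : ℤ,
    Tendsto (fun n : ℕ => ∑ k ∈ Finset.range (n + 1), (convP p k 0 - convP p k (-x)))
      atTop (𝓝 (a x))

/-- `expHit p A a x y = E_x[a(S_{σ_A} - y)]`. -/
def expHit (p : ℤ → ℝ) (A : Set ℤ) (a : ℤ → ℝ) (x y : ℤ) : ℝ :=
  ∑' ξ : ℤ, hitDist p A x ξ * a (ξ - y)

/-- The function `u_A(x) = a†(x-ξ0) - E_x[a(S_{σ_A} - ξ0)]`. -/
def uFn (p : ℤ → ℝ) (A : Set ℤ) (a : ℤ → ℝ) (ξ0 x : ℤ) : ℝ :=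
  adag a (x - ξ0) - expHit p A a x ξ0

/-- The interval `U(R) = {-R+1, …, R-1}`. -/
def Uset (R : ℕ) : Set ℤ := {z : ℤ | -(R : ℤ) < z ∧ z < (R : ℤ)}

/-- `escExp p A R x = E_x[S_{σ_{[R,∞)}} ; σ_{[R,∞)} < σ_A]`. -/
def escExp (p : ℤ → ℝ) (A : Set ℤ) (R : ℕ) (x : ℤ) : ℝ :=
  ∑' z : ℤ, (z : ℝ) * entBefore p A {w : ℤ | (R : ℤ) ≤ w} x z

/-- The Gaussian kernel `𝗀_t(u) = (2πvt)^{-1/2} e^{-u²/(2vt)}` with variance parameter `v`. -/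
def gaussK (v t u : ℝ) : ℝ := Real.exp (-(u ^ 2) / (2 * v * t)) / Real.sqrt (2 * Real.pi * v * t)

/-- A mean-zero, finite-variance, irreducible random walk on `ℤ`, described by the
distribution `p` of its i.i.d. increments. -/
structure RandomWalk where
  p : ℤ → ℝ
  nonneg : ∀ z : ℤ, 0 ≤ p z
  sum_one : HasSum p 1
  var : ℝ
  var_pos : 0 < var
  mean_zero : HasSum (fun z : ℤ => (z : ℝ) * p z) 0
  hasSum_var : HasSum (fun z : ℤ => (z : ℝ) ^ 2 * p z) var
  irred : ∀ x : ℤ, ∃ n : ℕ, 0 < n ∧ 0 < convP p n x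

namespace RWLem

/-- transition kernel in `ℝ≥0∞`. -/
def cE (q : ℤ → ℝ≥0∞) : ℕ → ℤ → ℝ≥0∞
  | 0, x => if x = 0 then 1 else 0
  | n + 1, x => ∑' z : ℤ, cE q n z * q (x - z)

def kE (q : ℤ → ℝ≥0∞) (A : Set ℤ) : ℕ → ℤ → ℤ → ℝ≥0∞
  | 0, x, y => if x = y then 1 else 0
  | n + 1, x, y => ∑' z : ℤ, if z ∈ A then 0 else q (z - x) * kE q A n z y

def ebE (q : ℤ → ℝ≥0∞) (A B : Set ℤ) : ℕ → ℤ → ℤ → ℝ≥0∞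
  | 0, _, _ => 0
  | n + 1, x, z => if z ∈ B \ A then ∑' w : ℤ, kE q (A ∪ B) n x w * q (z - w) else 0

section Ekernel

variable {q : ℤ → ℝ≥0∞} (hq1 : ∑' z : ℤ, q z = 1)

lemma tsum_shift (f : ℤ → ℝ≥0∞) (c : ℤ) : ∑' z : ℤ, f (z - c) = ∑' z : ℤ, f z :=
  (Equiv.subRight c).tsum_eq f

include hq1

lemma q_le_one (z : ℤ) : q z ≤ 1 := hq1 ▸ ENNReal.le_tsum z

lemma q_ne_top (z : ℤ) : q z ≠ ⊤ := ((q_le_one hq1 z).trans_lt (by norm_num)).ne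

lemma cE_mass (n : ℕ) : ∑' x : ℤ, cE q n x = 1 := by
  induction n with
  | zero => simp [cE, tsum_ite_eq]
  | succ n ih =>
      simp only [cE]
      rw [ENNReal.tsum_comm]
      calc ∑' z : ℤ, ∑' x : ℤ, cE q n z * q (x - z)
          = ∑' z : ℤ, cE q n z * ∑' x : ℤ, q (x - z) := by
            simp [ENNReal.tsum_mul_left]
        _ = 1 := by
            simp only [tsum_shift, hq1, mul_one, ih]

lemma cE_le_one (n : ℕ) (x : ℤ) : cE q n x ≤ 1 :=
  (ENNReal.le_tsum x).trans (cE_mass hq1 n).le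

lemma cE_ne_top (n : ℕ) (x : ℤ) : cE q n x ≠ ⊤ :=
  ((cE_le_one hq1 n x).trans_lt (by norm_num)).ne

lemma cE_first (n : ℕ) (x : ℤ) : cE q (n + 1) x = ∑' z : ℤ, q z * cE q n (x - z) := by
  induction n generalizing x with
  | zero =>
      simp only [cE]
      rw [tsum_eq_single (0 : ℤ) (by intro b hb; simp [hb]),
        tsum_eq_single x (by intro b hb; simp [sub_eq_zero, (Ne.symm hb)])]
      simp
  | succ n ih =>
      calc cE q (n + 2) x = ∑' z : ℤ, cE q (n+1) z * q (x - z) := rfl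
        _ = ∑' z : ℤ, ∑' u : ℤ, q u * cE q n (z - u) * q (x - z) := by
              simp only [ih, ENNReal.tsum_mul_right]
        _ = ∑' u : ℤ, q u * ∑' z : ℤ, cE q n (z - u) * q (x - z) := by
              rw [ENNReal.tsum_comm]
              congr 1; ext u
              rw [← ENNReal.tsum_mul_left]
              congr 1; ext z; ring
        _ = ∑' u : ℤ, q u * cE q (n+1) (x - u) := by
              congr 1; ext u
              congr 1
              have := tsum_shift (fun w => cE q n w * q ((x - u) - w)) u
              simp only [sub_sub_sub_cancel_right] at this
              rw [this]
              rfl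

lemma kE_last (A : Set ℤ) (n : ℕ) (x y : ℤ) :
    kE q A (n + 1) x y = if y ∈ A then 0 else ∑' w : ℤ, kE q A n x w * q (y - w) := by
  induction n generalizing x y with
  | zero =>
      simp only [kE]
      rw [tsum_eq_single y (by intro b hb; rcases em (b ∈ A) with h|h <;> simp [h, hb]),
        tsum_eq_single x (by intro b hb; simp [Ne.symm hb])]
      by_cases h : y ∈ A <;> simp [h, kE]
  | succ n ih =>
      calc kE q A (n + 2) x y
          = ∑' z : ℤ, if z ∈ A then 0 else q (z - x) * kE q A (n+1) z y := rfl
        _ = ∑' z : ℤ, if z ∈ A then 0 else q (z - x) *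
              (if y ∈ A then 0 else ∑' w : ℤ, kE q A n z w * q (y - w)) := by
              simp only [ih]
        _ = if y ∈ A then 0 else ∑' w : ℤ, kE q A (n+1) x w * q (y - w) := by
              by_cases hy : y ∈ A
              · simp [hy]
              · simp only [hy, if_false]
                have L : ∀ z : ℤ, (if z ∈ A then 0 else q (z - x) * ∑' w : ℤ, kE q A n z w * q (y - w))
                    = ∑' w : ℤ, (if z ∈ A then 0 else q (z - x) * kE q A n z w) * q (y - w) := by
                  intro z
                  by_cases hz : z ∈ A
                  · simp [hz]
                  · simp only [hz, if_false]
                    rw [← ENNReal.tsum_mul_left]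
                    congr 1; ext w; ring
                simp only [L]
                rw [ENNReal.tsum_comm]
                congr 1; ext w
                rw [ENNReal.tsum_mul_right]
                congr 1

lemma kE_mass (A : Set ℤ) (n : ℕ) (x : ℤ) : ∑' y : ℤ, kE q A n x y ≤ 1 := by
  induction n generalizing x with
  | zero =>
      simp only [kE]
      rw [tsum_eq_single x (fun b hb => by simp [Ne.symm hb])]
      simp
  | succ n ih =>
      calc ∑' y : ℤ, kE q A (n+1) x y
          = ∑' z : ℤ, ∑' y : ℤ, (if z ∈ A then 0 else q (z - x) * kE q A n z y) := by
              simp only [kE]; rw [ENNReal.tsum_comm]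
        _ ≤ ∑' z : ℤ, q (z - x) := by
              apply ENNReal.tsum_le_tsum
              intro z
              by_cases hz : z ∈ A
              · simp [hz]
              · simp only [hz, if_false, ENNReal.tsum_mul_left]
                exact le_trans (mul_le_mul_right (ih z) _) (by simp)
        _ = 1 := by rw [tsum_shift q x, hq1]

lemma kE_le_one (A : Set ℤ) (n : ℕ) (x y : ℤ) : kE q A n x y ≤ 1 :=
  (ENNReal.le_tsum y).trans (kE_mass hq1 A n x)

lemma kE_ne_top (A : Set ℤ) (n : ℕ) (x y : ℤ) : kE q A n x y ≠ ⊤ :=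
  ((kE_le_one hq1 A n x y).trans_lt (by norm_num)).ne

lemma kE_zero_of_mem (A : Set ℤ) (n : ℕ) (x y : ℤ) (hy : y ∈ A) :
    kE q A (n + 1) x y = 0 := by
  rw [kE_last hq1, if_pos hy]

lemma kE_empty (n : ℕ) (x y : ℤ) : kE q (∅ : Set ℤ) n x y = cE q n (y - x) := by
  induction n generalizing x y with
  | zero =>
      simp only [kE, cE, sub_eq_zero]
      exact if_congr eq_comm rfl rfl
  | succ n ih =>
      calc kE q (∅ : Set ℤ) (n+1) x y
          = ∑' z : ℤ, q (z - x) * cE q n (y - z) := by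
              simp only [kE, Set.mem_empty_iff_false, if_false, ih]
        _ = ∑' z : ℤ, q z * cE q n ((y - x) - z) := by
              have := tsum_shift (fun z => q z * cE q n ((y - x) - z)) x
              rw [← this]
              congr 1; ext z
              congr 2
              ring
        _ = cE q (n+1) (y - x) := (cE_first hq1 n (y - x)).symm

omit hq1 in
lemma ite_zero_mul (c : Prop) [Decidable c] (a b : ℝ≥0∞) :
    (if c then 0 else a) * b = if c then 0 else a * b := by
  by_cases h : c <;> simp [h]

omit hq1 in
lemma ite_zero_tsum (c : Prop) [Decidable c] (a : ℝ≥0∞) (f : ℤ → ℝ≥0∞) :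
    (if c then 0 else a * ∑' z : ℤ, f z) = ∑' z : ℤ, if c then 0 else a * f z := by
  by_cases h : c <;> simp [h, ENNReal.tsum_mul_left]

omit hq1 in
lemma ebE_one (A B : Set ℤ) (x z : ℤ) :
    ebE q A B 1 x z = if z ∈ B \ A then q (z - x) else 0 := by
  simp only [ebE]
  by_cases h : z ∈ B \ A
  · simp only [h, if_true]
    rw [tsum_eq_single x (fun b hb => by simp [kE, Ne.symm hb])]
    simp [kE]
  · simp [h]

omit hq1 in
lemma ebE_first (A B : Set ℤ) (m : ℕ) (x z : ℤ) :
    ebE q A B (m + 2) x z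
      = ∑' u : ℤ, if u ∈ A ∪ B then 0 else q (u - x) * ebE q A B (m + 1) u z := by
  by_cases h : z ∈ B \ A
  · have L : ∀ u : ℤ, (if u ∈ A ∪ B then 0 else q (u - x) * ebE q A B (m+1) u z)
        = ∑' w : ℤ, (if u ∈ A ∪ B then 0 else q (u - x) * kE q (A ∪ B) m u w) * q (z - w) := by
      intro u
      simp only [ebE, h, if_true]
      rw [ite_zero_tsum]
      congr 1; ext w
      by_cases hu : u ∈ A ∪ B
      · simp [hu]
      · simp only [hu, if_false]; ring
    simp only [L]
    rw [ENNReal.tsum_comm]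
    simp only [ebE, h, if_true]
    congr 1; ext w
    rw [ENNReal.tsum_mul_right]
    congr 1
    simp only [kE]
    exact tsum_congr fun i => by split_ifs <;> rfl
  · have hz : ∀ (j : ℕ) (u : ℤ), ebE q A B (j+1) u z = 0 := fun j u => by simp [ebE, h]
    simp [ebE, h, hz]

omit hq1 in
lemma ebE_zero_of_not_mem (A B : Set ℤ) (n : ℕ) (x z : ℤ) (hz : z ∉ B \ A) :
    ebE q A B n x z = 0 := by
  cases n with
  | zero => rfl
  | succ n => simp [ebE, hz]

lemma ebE_kE_mass_step (A B : Set ℤ) (n : ℕ) (x : ℤ) :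
    (∑' z : ℤ, ebE q A B (n+1) x z) + ∑' y : ℤ, kE q (A ∪ B) (n+1) x y
      ≤ ∑' y : ℤ, kE q (A ∪ B) n x y := by
  have F : ∀ z : ℤ, ebE q A B (n+1) x z + kE q (A ∪ B) (n+1) x z
      ≤ ∑' w : ℤ, kE q (A ∪ B) n x w * q (z - w) := by
    intro z
    rw [kE_last hq1]
    simp only [ebE]
    by_cases h1 : z ∈ B \ A
    · have h2 : z ∈ A ∪ B := Or.inr h1.1
      simp [h1, h2]
    · by_cases h2 : z ∈ A ∪ B
      · simp [h1, h2]
      · simp [h1, h2]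
  calc (∑' z : ℤ, ebE q A B (n+1) x z) + ∑' y : ℤ, kE q (A ∪ B) (n+1) x y
      = ∑' z : ℤ, (ebE q A B (n+1) x z + kE q (A ∪ B) (n+1) x z) := (ENNReal.tsum_add).symm
    _ ≤ ∑' z : ℤ, ∑' w : ℤ, kE q (A ∪ B) n x w * q (z - w) := ENNReal.tsum_le_tsum F
    _ = ∑' w : ℤ, kE q (A ∪ B) n x w * ∑' z : ℤ, q (z - w) := by
        rw [ENNReal.tsum_comm]; simp [ENNReal.tsum_mul_left]
    _ = ∑' w : ℤ, kE q (A ∪ B) n x w := by simp [tsum_shift q, hq1]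

lemma ebE_partial_mass (A B : Set ℤ) (N : ℕ) (x : ℤ) :
    (∑ j ∈ Finset.range (N+1), ∑' z : ℤ, ebE q A B j x z)
      + ∑' y : ℤ, kE q (A ∪ B) N x y ≤ 1 := by
  induction N with
  | zero =>
      rw [Finset.sum_range_succ]
      have h0 : (∑' z : ℤ, ebE q A B 0 x z) = 0 := by simp [ebE]
      simpa [h0] using kE_mass hq1 (A ∪ B) 0 x
  | succ N ih =>
      rw [Finset.sum_range_succ]
      calc (∑ j ∈ Finset.range (N+1), ∑' z : ℤ, ebE q A B j x z)
            + (∑' z : ℤ, ebE q A B (N+1) x z) + ∑' y : ℤ, kE q (A ∪ B) (N+1) x y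
          ≤ (∑ j ∈ Finset.range (N+1), ∑' z : ℤ, ebE q A B j x z)
            + ∑' y : ℤ, kE q (A ∪ B) N x y := by
            rw [add_assoc]
            exact add_le_add_right (ebE_kE_mass_step hq1 A B N x) _
        _ ≤ 1 := ih

lemma ebE_total_mass (A B : Set ℤ) (x : ℤ) :
    ∑' j : ℕ, ∑' z : ℤ, ebE q A B j x z ≤ 1 := by
  rw [ENNReal.tsum_eq_iSup_sum]
  apply iSup_le
  intro s
  obtain ⟨N, hN⟩ := s.exists_nat_subset_range
  calc ∑ j ∈ s, ∑' z : ℤ, ebE q A B j x z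
      ≤ ∑ j ∈ Finset.range (N + 1), ∑' z : ℤ, ebE q A B j x z :=
        Finset.sum_le_sum_of_subset (hN.trans (Finset.range_subset_range.mpr (by omega)))
    _ ≤ 1 := le_trans (le_add_of_nonneg_right zero_le) (ebE_partial_mass hq1 A B N x)

lemma ebE_le_one (A B : Set ℤ) (j : ℕ) (x z : ℤ) : ebE q A B j x z ≤ 1 :=
  le_trans (ENNReal.le_tsum z) (le_trans (ENNReal.le_tsum j) (ebE_total_mass hq1 A B x))

lemma ebE_ne_top (A B : Set ℤ) (j : ℕ) (x z : ℤ) : ebE q A B j x z ≠ ⊤ :=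
  ((ebE_le_one hq1 A B j x z).trans_lt (by norm_num)).ne

lemma decompE (A B : Set ℤ) (n : ℕ) (x y : ℤ) :
    kE q A n x y = kE q (A ∪ B) n x y
      + ∑ j ∈ Finset.range n, ∑' z : ℤ, ebE q A B (j+1) x z * kE q A (n - (j+1)) z y := by
  induction n generalizing x with
  | zero => simp [kE]
  | succ n ih =>
      have split : ∀ u : ℤ, (if u ∈ A then 0 else q (u - x) * kE q A n u y)
          = (if u ∈ A ∪ B then 0 else q (u - x) * kE q A n u y)
            + (if u ∈ B \ A then q (u - x) * kE q A n u y else 0) := by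
        intro u
        by_cases hA : u ∈ A
        · simp [hA, Set.mem_union, Set.mem_diff]
        · by_cases hB : u ∈ B
          · simp [hA, hB, Set.mem_union, Set.mem_diff]
          · simp [hA, hB, Set.mem_union, Set.mem_diff]
      have lhs1 : kE q A (n+1) x y
          = (∑' u : ℤ, if u ∈ A ∪ B then 0 else q (u - x) * kE q A n u y)
            + ∑' z : ℤ, ebE q A B 1 x z * kE q A n z y := by
        calc kE q A (n+1) x y
            = ∑' u : ℤ, (if u ∈ A then 0 else q (u - x) * kE q A n u y) := rfl
          _ = (∑' u : ℤ, if u ∈ A ∪ B then 0 else q (u - x) * kE q A n u y)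
              + ∑' u : ℤ, (if u ∈ B \ A then q (u - x) * kE q A n u y else 0) := by
              simp only [split]; exact ENNReal.tsum_add
          _ = (∑' u : ℤ, if u ∈ A ∪ B then 0 else q (u - x) * kE q A n u y)
              + ∑' z : ℤ, ebE q A B 1 x z * kE q A n z y := by
              congr 1
              congr 1; ext z
              rw [ebE_one]
              by_cases h : z ∈ B \ A <;> simp [h]
      have main : (∑' u : ℤ, if u ∈ A ∪ B then 0 else q (u - x) * kE q A n u y)
          = kE q (A ∪ B) (n+1) x y
            + ∑ j ∈ Finset.range n, ∑' z : ℤ, ebE q A B (j+2) x z * kE q A (n - (j+1)) z y := by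
        calc (∑' u : ℤ, if u ∈ A ∪ B then 0 else q (u - x) * kE q A n u y)
            = ∑' u : ℤ, ((if u ∈ A ∪ B then 0 else q (u - x) * kE q (A ∪ B) n u y)
              + ∑ j ∈ Finset.range n, ∑' z : ℤ,
                  (if u ∈ A ∪ B then 0 else q (u - x) * (ebE q A B (j+1) u z * kE q A (n - (j+1)) z y))) := by
              congr 1; ext u
              by_cases hu : u ∈ A ∪ B
              · simp [hu]
              · simp only [hu, if_false, ih u, mul_add, Finset.mul_sum, ENNReal.tsum_mul_left]
          _ = (∑' u : ℤ, if u ∈ A ∪ B then 0 else q (u - x) * kE q (A ∪ B) n u y)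
              + ∑' u : ℤ, ∑ j ∈ Finset.range n, ∑' z : ℤ,
                  (if u ∈ A ∪ B then 0 else q (u - x) * (ebE q A B (j+1) u z * kE q A (n - (j+1)) z y)) :=
              ENNReal.tsum_add
          _ = kE q (A ∪ B) (n+1) x y
              + ∑ j ∈ Finset.range n, ∑' z : ℤ, ebE q A B (j+2) x z * kE q A (n - (j+1)) z y := by
              congr 1
              · simp only [kE]
                exact tsum_congr fun i => by split_ifs <;> rfl
              rw [Summable.tsum_finsetSum (fun _ _ => ENNReal.summable)]
              apply Finset.sum_congr rfl
              intro j _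
              rw [ENNReal.tsum_comm]
              congr 1; ext z
              rw [ebE_first, ← ENNReal.tsum_mul_right]
              congr 1; ext u
              rw [ite_zero_mul]
              by_cases hu : u ∈ A ∪ B
              · simp [hu]
              · simp only [hu, if_false]; ring
      rw [lhs1, main, Finset.sum_range_succ' _ n]
      have e1 : ∀ j, (n + 1) - (j + 1 + 1) = n - (j+1) := by intro j; omega
      simp only [Nat.add_sub_cancel, e1]
      ring

lemma starE (B : Set ℤ) (n : ℕ) (x y : ℤ) :
    cE q n (y - x) = kE q B n x y
      + ∑ j ∈ Finset.range n, ∑' z : ℤ, ebE q (∅ : Set ℤ) B (j+1) x z * cE q (n - (j+1)) (y - z) := by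
  have h := decompE hq1 (∅ : Set ℤ) B n x y
  rw [Set.empty_union] at h
  simp only [kE_empty hq1] at h
  exact h

lemma exists_enter (A' : Set ℤ) (y : ℤ) (hy : y ∉ A') (ξ0 : ℤ) (hξ0 : ξ0 ∈ A')
    (n : ℕ) (hne : cE q n (ξ0 - y) ≠ 0) :
    ∃ j ξ, ξ ∈ A' ∧ ebE q (∅ : Set ℤ) (A' ∪ {y}) j y ξ ≠ 0 := by
  induction n using Nat.strong_induction_on with
  | _ n IH =>
      cases n with
      | zero =>
          exfalso
          apply hy
          have : ξ0 - y = 0 := by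
            by_contra h0
            simp [cE, h0] at hne
          have : ξ0 = y := by omega
          exact this ▸ hξ0
      | succ n =>
          rw [starE hq1 (A' ∪ {y}) (n+1) y ξ0] at hne
          rw [kE_zero_of_mem hq1 _ n y ξ0 (Or.inl hξ0), zero_add] at hne
          obtain ⟨j, hjmem, hj⟩ : ∃ j ∈ Finset.range (n+1),
              (∑' z : ℤ, ebE q (∅ : Set ℤ) (A' ∪ {y}) (j+1) y z
                * cE q ((n+1) - (j+1)) (ξ0 - z)) ≠ 0 := by
            by_contra hcon
            push_neg at hcon
            exact hne (Finset.sum_eq_zero hcon)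
          obtain ⟨z, hz⟩ : ∃ z : ℤ, ebE q (∅ : Set ℤ) (A' ∪ {y}) (j+1) y z
              * cE q ((n+1) - (j+1)) (ξ0 - z) ≠ 0 := by
            by_contra hcon
            push_neg at hcon
            exact hj (by rw [tsum_congr hcon, tsum_zero])
          have heb : ebE q (∅ : Set ℤ) (A' ∪ {y}) (j+1) y z ≠ 0 := fun h => hz (by rw [h, zero_mul])
          have hcE : cE q ((n+1) - (j+1)) (ξ0 - z) ≠ 0 := fun h => hz (by rw [h, mul_zero])
          have hzmem : z ∈ A' ∪ {y} := by
            by_contra hcon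
            exact heb (ebE_zero_of_not_mem _ _ _ _ _ (by rw [Set.diff_empty]; exact hcon))
          rcases hzmem with hzA | hzy
          · exact ⟨j+1, z, hzA, heb⟩
          · have hzy' : z = y := hzy
            subst hzy'
            have hlt : (n+1) - (j+1) < n + 1 := by
              have := Finset.mem_range.mp hjmem
              omega
            exact IH _ hlt hcE


lemma decomp_single (A : Set ℤ) (y : ℤ) (n : ℕ) (x : ℤ) :
    kE q A n x y = kE q (A ∪ {y}) n x y
      + ∑ j ∈ Finset.range n, ebE q A {y} (j+1) x y * kE q A (n - (j+1)) y y := by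
  rw [decompE hq1 A {y} n x y]
  congr 1
  apply Finset.sum_congr rfl
  intro j _
  rw [tsum_eq_single y]
  intro z hz
  have hmem : z ∉ ({y} : Set ℤ) \ A := fun hmem => hz hmem.1
  rw [ebE_zero_of_not_mem A {y} (j+1) x z hmem, zero_mul]

end Ekernel

/-! ### general triangle rearrangement -/

lemma sum_triangle {M : Type*} [AddCommMonoid M] (f : ℕ → ℕ → M) (N : ℕ) :
    ∑ n ∈ Finset.range N, ∑ j ∈ Finset.range n, f j (n - (j+1))
      = ∑ j ∈ Finset.range N, ∑ m ∈ Finset.range (N - (j+1)), f j m := by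
  induction N with
  | zero => simp
  | succ N ih =>
      rw [Finset.sum_range_succ, ih,
        Finset.sum_range_succ (fun j => ∑ m ∈ Finset.range (N + 1 - (j+1)), f j m) N]
      simp only [Nat.sub_self, Finset.range_zero, Finset.sum_empty, add_zero]
      rw [← Finset.sum_add_distrib]
      apply Finset.sum_congr rfl
      intro j hj
      have hj' : N + 1 - (j+1) = (N - (j+1)) + 1 := by
        have := Finset.mem_range.mp hj; omega
      rw [hj', Finset.sum_range_succ]

/-! ### Bridging to real kernels -/

section Bridge

variable {p : ℤ → ℝ} (hp0 : ∀ z : ℤ, 0 ≤ p z) (hp1 : HasSum p 1)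

/-- real step distribution lifted to `ℝ≥0∞`. -/
def qq (p : ℤ → ℝ) : ℤ → ℝ≥0∞ := fun z => ENNReal.ofReal (p z)

include hp0 hp1

omit hp1 in
lemma qq_toReal (z : ℤ) : (qq p z).toReal = p z := ENNReal.toReal_ofReal (hp0 z)

lemma qq1 : ∑' z : ℤ, qq p z = 1 := by
  show ∑' z : ℤ, ENNReal.ofReal (p z) = 1
  rw [← ENNReal.ofReal_tsum_of_nonneg hp0 hp1.summable, hp1.tsum_eq, ENNReal.ofReal_one]

lemma convP_eq (n : ℕ) (x : ℤ) : convP p n x = (cE (qq p) n x).toReal := by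
  induction n generalizing x with
  | zero => simp only [convP, cE]; split <;> simp
  | succ n ih =>
      calc convP p (n+1) x = ∑' z : ℤ, convP p n z * p (x - z) := by simp only [convP]
        _ = ∑' z : ℤ, ((cE (qq p) n z) * qq p (x - z)).toReal := by
            congr 1; ext z
            rw [ih, ENNReal.toReal_mul, qq_toReal hp0]
        _ = (∑' z : ℤ, cE (qq p) n z * qq p (x - z)).toReal := by
            rw [ENNReal.tsum_toReal_eq]
            intro z
            exact ENNReal.mul_ne_top (cE_ne_top (qq1 hp0 hp1) n z) ENNReal.ofReal_ne_top
        _ = (cE (qq p) (n+1) x).toReal := by simp only [cE]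

lemma kp_eq (A : Set ℤ) (n : ℕ) (x y : ℤ) : kp p A n x y = (kE (qq p) A n x y).toReal := by
  induction n generalizing x with
  | zero => simp only [kp, kE]; split <;> simp
  | succ n ih =>
      calc kp p A (n+1) x y = ∑' z : ℤ, (if z ∈ A then 0 else p (z - x) * kp p A n z y) := by
            simp only [kp]
        _ = ∑' z : ℤ, ((if z ∈ A then 0 else qq p (z - x) * kE (qq p) A n z y) : ℝ≥0∞).toReal := by
            congr 1; ext z
            by_cases hz : z ∈ A
            · simp [hz]
            · simp only [hz, if_false]
              rw [ih, ENNReal.toReal_mul, qq_toReal hp0]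
        _ = (∑' z : ℤ, if z ∈ A then 0 else qq p (z - x) * kE (qq p) A n z y).toReal := by
            rw [ENNReal.tsum_toReal_eq]
            intro z
            by_cases hz : z ∈ A
            · simp [hz]
            · simp only [hz, if_false]
              exact ENNReal.mul_ne_top ENNReal.ofReal_ne_top (kE_ne_top (qq1 hp0 hp1) A n z y)
        _ = (kE (qq p) A (n+1) x y).toReal := by simp only [kE]

lemma entBeforeAt_eq (A B : Set ℤ) (n : ℕ) (x z : ℤ) :
    entBeforeAt p A B n x z = (ebE (qq p) A B n x z).toReal := by
  cases n with
  | zero => simp [entBeforeAt, ebE]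
  | succ n =>
      simp only [entBeforeAt, ebE]
      by_cases h : z ∈ B \ A
      · simp only [h, if_true]
        calc (∑' w : ℤ, kp p (A ∪ B) n x w * p (z - w))
            = ∑' w : ℤ, ((kE (qq p) (A ∪ B) n x w * qq p (z - w) : ℝ≥0∞)).toReal := by
              congr 1; ext w
              rw [kp_eq hp0 hp1, ENNReal.toReal_mul, qq_toReal hp0]
          _ = (∑' w : ℤ, kE (qq p) (A ∪ B) n x w * qq p (z - w)).toReal := by
              rw [ENNReal.tsum_toReal_eq]
              intro w
              exact ENNReal.mul_ne_top (kE_ne_top (qq1 hp0 hp1) _ n x w) ENNReal.ofReal_ne_top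
      · simp [h]

lemma hitAt_eq (A : Set ℤ) (n : ℕ) (x ξ : ℤ) :
    hitAt p A n x ξ = (ebE (qq p) (∅ : Set ℤ) A n x ξ).toReal := by
  cases n with
  | zero => simp [hitAt, ebE]
  | succ n =>
      simp only [hitAt, ebE, Set.empty_union, Set.diff_empty]
      by_cases h : ξ ∈ A
      · simp only [h, if_true]
        calc (∑' w : ℤ, kp p A n x w * p (ξ - w))
            = ∑' w : ℤ, ((kE (qq p) A n x w * qq p (ξ - w) : ℝ≥0∞)).toReal := by
              congr 1; ext w
              rw [kp_eq hp0 hp1, ENNReal.toReal_mul, qq_toReal hp0]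
          _ = (∑' w : ℤ, kE (qq p) A n x w * qq p (ξ - w)).toReal := by
              rw [ENNReal.tsum_toReal_eq]
              intro w
              exact ENNReal.mul_ne_top (kE_ne_top (qq1 hp0 hp1) _ n x w) ENNReal.ofReal_ne_top
      · simp [h]

lemma kp_nonneg (A : Set ℤ) (n : ℕ) (x y : ℤ) : 0 ≤ kp p A n x y := by
  rw [kp_eq hp0 hp1]; exact ENNReal.toReal_nonneg

lemma hitAt_nonneg (A : Set ℤ) (n : ℕ) (x ξ : ℤ) : 0 ≤ hitAt p A n x ξ := by
  rw [hitAt_eq hp0 hp1]; exact ENNReal.toReal_nonneg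

lemma entBeforeAt_nonneg (A B : Set ℤ) (n : ℕ) (x z : ℤ) : 0 ≤ entBeforeAt p A B n x z := by
  rw [entBeforeAt_eq hp0 hp1]; exact ENNReal.toReal_nonneg

lemma ebE_single_ne_top (A B : Set ℤ) (x z : ℤ) : ∑' j : ℕ, ebE (qq p) A B j x z ≠ ⊤ := by
  refine ne_top_of_le_ne_top (by norm_num : (1:ℝ≥0∞) ≠ ⊤) ?_
  refine le_trans ?_ (ebE_total_mass (qq1 hp0 hp1) A B x)
  exact ENNReal.tsum_le_tsum fun j => ENNReal.le_tsum z

lemma summable_hitAt (A : Set ℤ) (x ξ : ℤ) : Summable (fun j : ℕ => hitAt p A j x ξ) := by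
  have := ENNReal.summable_toReal (ebE_single_ne_top hp0 hp1 (∅ : Set ℤ) A x ξ)
  exact this.congr fun j => (hitAt_eq hp0 hp1 A j x ξ).symm

lemma hitDist_eq (A : Set ℤ) (x ξ : ℤ) :
    hitDist p A x ξ = (∑' j : ℕ, ebE (qq p) (∅ : Set ℤ) A j x ξ).toReal := by
  rw [hitDist, ENNReal.tsum_toReal_eq fun j => ?_]
  · exact tsum_congr fun j => hitAt_eq hp0 hp1 A j x ξ
  · exact ((ebE_le_one (qq1 hp0 hp1) _ A j x ξ).trans_lt (by norm_num)).ne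

omit hp0 hp1 in
lemma hitAt_zero_of_not_mem (A : Set ℤ) (n : ℕ) (x ξ : ℤ) (h : ξ ∉ A) :
    hitAt p A n x ξ = 0 := by
  cases n with
  | zero => rfl
  | succ n => simp [hitAt, h]

omit hp0 hp1 in
lemma hitDist_zero_of_not_mem (A : Set ℤ) (x ξ : ℤ) (h : ξ ∉ A) : hitDist p A x ξ = 0 := by
  rw [hitDist, tsum_congr (fun n => hitAt_zero_of_not_mem A n x ξ h), tsum_zero]

lemma ebE_eq_hit (A : Set ℤ) (y : ℤ) (hy : y ∉ A) (j : ℕ) (u : ℤ) :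
    ebE (qq p) A {y} j u y = ebE (qq p) (∅ : Set ℤ) (A ∪ {y}) j u y := by
  cases j with
  | zero => rfl
  | succ j =>
      simp only [ebE, Set.empty_union, Set.diff_empty]
      have h1 : y ∈ ({y} : Set ℤ) \ A := ⟨rfl, hy⟩
      have h2 : y ∈ A ∪ {y} := Or.inr rfl
      rw [if_pos h1, if_pos h2]

lemma ret_lt_one (A : Set ℤ) (y : ℤ) (hy : y ∉ A) (ξ0 : ℤ) (hξ0 : ξ0 ∈ A)
    (hirr : ∀ x : ℤ, ∃ n : ℕ, 0 < n ∧ 0 < convP p n x) :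
    (∑' j : ℕ, ebE (qq p) A {y} j y y).toReal < 1 := by
  have hq1 : ∑' z : ℤ, qq p z = 1 := qq1 hp0 hp1
  obtain ⟨n, -, hpos⟩ := hirr (ξ0 - y)
  have hcne : cE (qq p) n (ξ0 - y) ≠ 0 := by
    intro h
    rw [convP_eq hp0 hp1, h] at hpos
    simp at hpos
  obtain ⟨j0, ξ, hξA, hne⟩ := exists_enter hq1 A y hy ξ0 hξ0 n hcne
  set rE := ∑' j : ℕ, ebE (qq p) (∅ : Set ℤ) (A ∪ {y}) j y y with hrE
  have hxy : ξ ≠ y := fun h => hy (h ▸ hξA)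
  have key : rE + ebE (qq p) (∅ : Set ℤ) (A ∪ {y}) j0 y ξ ≤ 1 := by
    have step : ∀ j : ℕ, ebE (qq p) (∅:Set ℤ) (A∪{y}) j y y
        + (if j = j0 then ebE (qq p) (∅:Set ℤ) (A∪{y}) j0 y ξ else 0)
        ≤ ∑' z : ℤ, ebE (qq p) (∅:Set ℤ) (A∪{y}) j y z := by
      intro j
      by_cases hj : j = j0
      · subst hj
        rw [if_pos rfl]
        have h2 := ENNReal.sum_le_tsum (f := fun z => ebE (qq p) (∅:Set ℤ) (A∪{y}) j y z)
          ({y, ξ} : Finset ℤ)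
        rwa [Finset.sum_pair (fun h => hxy h.symm)] at h2
      · rw [if_neg hj, add_zero]; exact ENNReal.le_tsum y
    calc rE + ebE (qq p) (∅:Set ℤ) (A∪{y}) j0 y ξ
        = ∑' j : ℕ, (ebE (qq p) (∅:Set ℤ) (A∪{y}) j y y
            + if j = j0 then ebE (qq p) (∅:Set ℤ) (A∪{y}) j0 y ξ else 0) := by
          rw [ENNReal.tsum_add, tsum_ite_eq]
      _ ≤ ∑' j : ℕ, ∑' z : ℤ, ebE (qq p) (∅:Set ℤ) (A∪{y}) j y z := ENNReal.tsum_le_tsum step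
      _ ≤ 1 := ebE_total_mass hq1 _ _ y
  have hrle : rE ≤ 1 := le_trans (le_add_of_nonneg_right zero_le) key
  have hrne : rE ≠ 1 := by
    intro h
    rw [h] at key
    have h2 : (1:ℝ≥0∞) + ebE (qq p) (∅:Set ℤ) (A∪{y}) j0 y ξ ≤ 1 + 0 := by simpa using key
    have h3 := (ENNReal.add_le_add_iff_left (by norm_num : (1:ℝ≥0∞) ≠ ⊤)).mp h2
    exact hne (le_antisymm (by simpa using h3) zero_le)
  have hEq : (∑' j : ℕ, ebE (qq p) A {y} j y y) = rE :=
    tsum_congr fun j => ebE_eq_hit hp0 hp1 A y hy j y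
  rw [hEq]
  have hlt : rE < 1 := lt_of_le_of_ne hrle hrne
  have := (ENNReal.toReal_lt_toReal (hlt.trans_le le_top).ne (by norm_num : (1:ℝ≥0∞) ≠ ⊤)).mpr hlt
  simpa using this

lemma kp_zero_of_mem (A : Set ℤ) (n : ℕ) (x y : ℤ) (hy : y ∈ A) : kp p A (n+1) x y = 0 := by
  rw [kp_eq hp0 hp1, kE_zero_of_mem (qq1 hp0 hp1) A n x y hy, ENNReal.toReal_zero]

lemma kp_decomp_single (A : Set ℤ) (y : ℤ) (n : ℕ) (x : ℤ) :
    kp p A n x y = kp p (A ∪ {y}) n x y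
      + ∑ j ∈ Finset.range n, entBeforeAt p A {y} (j+1) x y * kp p A (n - (j+1)) y y := by
  have hq1 : ∑' z : ℤ, qq p z = 1 := qq1 hp0 hp1
  rw [kp_eq hp0 hp1, decomp_single hq1 A y n x,
    ENNReal.toReal_add (kE_ne_top hq1 _ n x y)
      (by
        refine (ENNReal.sum_lt_top.mpr fun j _ => ?_).ne
        exact (ENNReal.mul_ne_top (ebE_ne_top hq1 _ _ _ _ _) (kE_ne_top hq1 _ _ _ _)).lt_top),
    ENNReal.toReal_sum (fun j _ => ENNReal.mul_ne_top (ebE_ne_top hq1 _ _ _ _ _) (kE_ne_top hq1 _ _ _ _))]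
  rw [← kp_eq hp0 hp1]
  congr 1
  apply Finset.sum_congr rfl
  intro j _
  rw [ENNReal.toReal_mul, ← entBeforeAt_eq hp0 hp1, ← kp_eq hp0 hp1]

lemma eb_partial_le_tsum (A B : Set ℤ) (x z : ℤ) (N : ℕ) :
    ∑ j ∈ Finset.range N, entBeforeAt p A B (j+1) x z
      ≤ (∑' j : ℕ, ebE (qq p) A B j x z).toReal := by
  have hq1 : ∑' z : ℤ, qq p z = 1 := qq1 hp0 hp1
  have h1 : ∑ j ∈ Finset.range N, entBeforeAt p A B (j+1) x z
      = (∑ j ∈ Finset.range N, ebE (qq p) A B (j+1) x z).toReal := by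
    rw [ENNReal.toReal_sum (fun j _ => ebE_ne_top hq1 _ _ _ _ _)]
    exact Finset.sum_congr rfl fun j _ => entBeforeAt_eq hp0 hp1 A B (j+1) x z
  rw [h1]
  apply ENNReal.toReal_mono (ebE_single_ne_top hp0 hp1 A B x z)
  calc ∑ j ∈ Finset.range N, ebE (qq p) A B (j+1) x z
      ≤ ∑ j ∈ Finset.range (N+1), ebE (qq p) A B j x z := by
        rw [Finset.sum_range_succ' (fun j => ebE (qq p) A B j x z) N]
        exact le_add_of_nonneg_right zero_le
    _ ≤ ∑' j : ℕ, ebE (qq p) A B j x z := ENNReal.sum_le_tsum _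

lemma ebE_tsum_le_one (A B : Set ℤ) (x z : ℤ) :
    (∑' j : ℕ, ebE (qq p) A B j x z).toReal ≤ 1 := by
  have hq1 : ∑' z : ℤ, qq p z = 1 := qq1 hp0 hp1
  have h1 : (∑' j : ℕ, ebE (qq p) A B j x z) ≤ 1 := by
    refine le_trans ?_ (ebE_total_mass hq1 A B x)
    exact ENNReal.tsum_le_tsum fun j => ENNReal.le_tsum z
  calc (∑' j : ℕ, ebE (qq p) A B j x z).toReal
      ≤ (1:ℝ≥0∞).toReal := ENNReal.toReal_mono (by norm_num) h1
    _ = 1 := by simp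

lemma indicator_kp_sum (A : Set ℤ) (y : ℤ) (hy : y ∈ A) (N : ℕ) (x : ℤ) :
    ∑ n ∈ Finset.range N, kp p A n x y ≤ 1 := by
  have hterm : ∀ n : ℕ, kp p A n x y = if n = 0 then (if x = y then 1 else 0) else 0 := by
    intro n
    cases n with
    | zero => simp [kp]
    | succ n => simp [kp_zero_of_mem hp0 hp1 A n x y hy]
  rw [Finset.sum_congr rfl fun n _ => hterm n]
  rw [Finset.sum_ite_eq' (Finset.range N) 0 (fun _ => if x = y then (1:ℝ) else 0)]
  split
  · split <;> norm_num
  · norm_num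

lemma green_partial_bound_self (A : Set ℤ) (y : ℤ) (hy : y ∉ A) (N : ℕ) :
    (∑ n ∈ Finset.range N, kp p A n y y)
      ≤ 1 + (∑' j : ℕ, ebE (qq p) A {y} j y y).toReal
          * (∑ n ∈ Finset.range N, kp p A n y y) := by
  set r := (∑' j : ℕ, ebE (qq p) A {y} j y y).toReal with hr
  set G := ∑ n ∈ Finset.range N, kp p A n y y with hG
  have hG0 : 0 ≤ G := Finset.sum_nonneg fun n _ => kp_nonneg hp0 hp1 A n y y
  calc G = ∑ n ∈ Finset.range N, (kp p (A ∪ {y}) n y y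
        + ∑ j ∈ Finset.range n, entBeforeAt p A {y} (j+1) y y * kp p A (n - (j+1)) y y) :=
        Finset.sum_congr rfl fun n _ => kp_decomp_single hp0 hp1 A y n y
    _ = (∑ n ∈ Finset.range N, kp p (A ∪ {y}) n y y)
        + ∑ n ∈ Finset.range N, ∑ j ∈ Finset.range n,
            entBeforeAt p A {y} (j+1) y y * kp p A (n - (j+1)) y y := Finset.sum_add_distrib
    _ ≤ 1 + r * G := by
        gcongr ?_ + ?_
        · exact indicator_kp_sum hp0 hp1 (A ∪ {y}) y (Or.inr rfl) N y
        · rw [sum_triangle (fun j m => entBeforeAt p A {y} (j+1) y y * kp p A m y y) N]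
          calc ∑ j ∈ Finset.range N, ∑ m ∈ Finset.range (N - (j+1)),
                entBeforeAt p A {y} (j+1) y y * kp p A m y y
              = ∑ j ∈ Finset.range N, entBeforeAt p A {y} (j+1) y y
                  * ∑ m ∈ Finset.range (N - (j+1)), kp p A m y y := by
                exact Finset.sum_congr rfl fun j _ => (Finset.mul_sum _ _ _).symm
            _ ≤ ∑ j ∈ Finset.range N, entBeforeAt p A {y} (j+1) y y * G := by
                apply Finset.sum_le_sum
                intro j _
                apply mul_le_mul_of_nonneg_left _ (entBeforeAt_nonneg hp0 hp1 _ _ _ _ _)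
                apply Finset.sum_le_sum_of_subset_of_nonneg
                  (Finset.range_subset_range.mpr (by omega))
                intro n _ _
                exact kp_nonneg hp0 hp1 A n y y
            _ = (∑ j ∈ Finset.range N, entBeforeAt p A {y} (j+1) y y) * G :=
                (Finset.sum_mul _ _ _).symm
            _ ≤ r * G := mul_le_mul_of_nonneg_right (eb_partial_le_tsum hp0 hp1 A {y} y y N) hG0

lemma green_summable (A : Set ℤ) (hA : A.Nonempty)
    (hirr : ∀ x : ℤ, ∃ n : ℕ, 0 < n ∧ 0 < convP p n x) (x y : ℤ) :
    Summable (fun n : ℕ => kp p A n x y) := by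
  by_cases hyA : y ∈ A
  · apply summable_of_ne_finset_zero (s := ({0} : Finset ℕ))
    intro n hn
    cases n with
    | zero => simp at hn
    | succ n => exact kp_zero_of_mem hp0 hp1 A n x y hyA
  · obtain ⟨ξ0, hξ0⟩ := hA
    set r := (∑' j : ℕ, ebE (qq p) A {y} j y y).toReal with hrdef
    have hr1 : r < 1 := ret_lt_one hp0 hp1 A y hyA ξ0 hξ0 hirr
    have hr0 : 0 ≤ r := ENNReal.toReal_nonneg
    have h1r : 0 < 1 - r := by linarith
    set K := 1 / (1 - r) with hK
    have hGK : ∀ N : ℕ, (∑ n ∈ Finset.range N, kp p A n y y) ≤ K := by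
      intro N
      set G := ∑ n ∈ Finset.range N, kp p A n y y with hG
      have hkey := green_partial_bound_self hp0 hp1 A y hyA N
      rw [← hrdef, ← hG] at hkey
      rw [hK, le_div_iff₀ h1r]
      nlinarith
    have hK0 : 0 ≤ K := by positivity
    have hSN : ∀ N : ℕ, (∑ n ∈ Finset.range N, kp p A n x y) ≤ 1 + K := by
      intro N
      calc ∑ n ∈ Finset.range N, kp p A n x y
          = (∑ n ∈ Finset.range N, kp p (A ∪ {y}) n x y)
            + ∑ n ∈ Finset.range N, ∑ j ∈ Finset.range n,
                entBeforeAt p A {y} (j+1) x y * kp p A (n - (j+1)) y y := by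
            rw [← Finset.sum_add_distrib]
            exact Finset.sum_congr rfl fun n _ => kp_decomp_single hp0 hp1 A y n x
        _ ≤ 1 + 1 * K := by
            gcongr ?_ + ?_
            · exact indicator_kp_sum hp0 hp1 (A ∪ {y}) y (Or.inr rfl) N x
            · rw [sum_triangle (fun j m => entBeforeAt p A {y} (j+1) x y * kp p A m y y) N]
              calc ∑ j ∈ Finset.range N, ∑ m ∈ Finset.range (N - (j+1)),
                    entBeforeAt p A {y} (j+1) x y * kp p A m y y
                  = ∑ j ∈ Finset.range N, entBeforeAt p A {y} (j+1) x y
                      * ∑ m ∈ Finset.range (N - (j+1)), kp p A m y y :=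
                    Finset.sum_congr rfl fun j _ => (Finset.mul_sum _ _ _).symm
                _ ≤ ∑ j ∈ Finset.range N, entBeforeAt p A {y} (j+1) x y * K := by
                    apply Finset.sum_le_sum
                    intro j _
                    exact mul_le_mul_of_nonneg_left (hGK _)
                      (entBeforeAt_nonneg hp0 hp1 _ _ _ _ _)
                _ = (∑ j ∈ Finset.range N, entBeforeAt p A {y} (j+1) x y) * K :=
                    (Finset.sum_mul _ _ _).symm
                _ ≤ 1 * K := mul_le_mul_of_nonneg_right
                    (le_trans (eb_partial_le_tsum hp0 hp1 A {y} x y N)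
                      (ebE_tsum_le_one hp0 hp1 A {y} x y)) hK0
        _ = 1 + K := by ring
    exact summable_of_sum_range_le (fun n => kp_nonneg hp0 hp1 A n x y) hSN

lemma starR (Af : Finset ℤ) (n : ℕ) (x y : ℤ) :
    convP p n (y - x) = kp p (↑Af : Set ℤ) n x y
      + ∑ j ∈ Finset.range n, ∑ ξ ∈ Af,
          hitAt p (↑Af : Set ℤ) (j+1) x ξ * convP p (n - (j+1)) (y - ξ) := by
  have hq1 : ∑' z : ℤ, qq p z = 1 := qq1 hp0 hp1
  have hE := starE hq1 (↑Af : Set ℤ) n x y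
  have hin : ∀ j : ℕ, (∑' z : ℤ, ebE (qq p) (∅ : Set ℤ) (↑Af : Set ℤ) (j+1) x z
      * cE (qq p) (n - (j+1)) (y - z))
      = ∑ ξ ∈ Af, ebE (qq p) (∅ : Set ℤ) (↑Af : Set ℤ) (j+1) x ξ
          * cE (qq p) (n - (j+1)) (y - ξ) := by
    intro j
    apply tsum_eq_sum
    intro z hz
    have hmem : z ∉ (↑Af : Set ℤ) \ (∅ : Set ℤ) := by
      rw [Set.diff_empty]; exact fun h => hz h
    rw [ebE_zero_of_not_mem _ _ _ _ _ hmem, zero_mul]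
  simp only [hin] at hE
  have hne2 : ∀ j ∈ Finset.range n,
      (∑ ξ ∈ Af, ebE (qq p) (∅ : Set ℤ) (↑Af : Set ℤ) (j+1) x ξ
        * cE (qq p) (n - (j+1)) (y - ξ)) ≠ ⊤ := by
    intro j _
    refine (ENNReal.sum_lt_top.mpr fun ξ _ => ?_).ne
    exact (ENNReal.mul_ne_top (ebE_ne_top hq1 _ _ _ _ _) (cE_ne_top hq1 _ _)).lt_top
  rw [convP_eq hp0 hp1, hE,
    ENNReal.toReal_add (kE_ne_top hq1 _ n x y)
      ((ENNReal.sum_lt_top.mpr fun j hj => (hne2 j hj).lt_top).ne),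
    ENNReal.toReal_sum hne2, ← kp_eq hp0 hp1]
  congr 1
  apply Finset.sum_congr rfl
  intro j hj
  rw [ENNReal.toReal_sum
    (fun ξ _ => ENNReal.mul_ne_top (ebE_ne_top hq1 _ _ _ _ _) (cE_ne_top hq1 _ _))]
  apply Finset.sum_congr rfl
  intro ξ _
  rw [ENNReal.toReal_mul, ← hitAt_eq hp0 hp1, ← convP_eq hp0 hp1]

lemma DC (Af : Finset ℤ) (x y : ℤ) (N : ℕ) :
    (∑ n ∈ Finset.range (N+1), kp p (↑Af : Set ℤ) n x y)
      + (∑ k ∈ Finset.range (N+1), (convP p k 0 - convP p k (-(x - y))))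
      - ∑ j ∈ Finset.range (N+1), ∑ ξ ∈ Af, hitAt p (↑Af : Set ℤ) (j+1) x ξ
          * (∑ k ∈ Finset.range (N - j), (convP p k 0 - convP p k (-(ξ - y))))
    = (∑ k ∈ Finset.range (N+1), convP p k 0)
      - ∑ j ∈ Finset.range (N+1), (∑ ξ ∈ Af, hitAt p (↑Af : Set ℤ) (j+1) x ξ)
          * ∑ k ∈ Finset.range (N - j), convP p k 0 := by
  have E1 : ∑ n ∈ Finset.range (N+1), convP p n (y - x)
      = (∑ n ∈ Finset.range (N+1), kp p (↑Af : Set ℤ) n x y)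
        + ∑ j ∈ Finset.range (N+1), ∑ ξ ∈ Af, hitAt p (↑Af : Set ℤ) (j+1) x ξ
            * ∑ m ∈ Finset.range (N - j), convP p m (y - ξ) := by
    rw [Finset.sum_congr rfl (fun n _ => starR hp0 hp1 Af n x y), Finset.sum_add_distrib]
    congr 1
    rw [sum_triangle (fun j m => ∑ ξ ∈ Af,
      hitAt p (↑Af : Set ℤ) (j+1) x ξ * convP p m (y - ξ)) (N+1)]
    apply Finset.sum_congr rfl
    intro j hj
    have hNj : N + 1 - (j+1) = N - j := by omega
    rw [hNj, Finset.sum_comm]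
    apply Finset.sum_congr rfl
    intro ξ _
    rw [← Finset.mul_sum]
  have hneg1 : -(x - y) = y - x := by ring
  have hneg2 : ∀ ξ : ℤ, -(ξ - y) = y - ξ := fun ξ => by ring
  simp only [hneg1, hneg2, Finset.sum_sub_distrib]
  have h3 : ∀ j ∈ Finset.range (N+1),
      ∑ ξ ∈ Af, hitAt p (↑Af : Set ℤ) (j+1) x ξ
        * ((∑ k ∈ Finset.range (N-j), convP p k 0)
            - ∑ k ∈ Finset.range (N-j), convP p k (y - ξ))
      = (∑ ξ ∈ Af, hitAt p (↑Af : Set ℤ) (j+1) x ξ)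
          * (∑ k ∈ Finset.range (N-j), convP p k 0)
        - ∑ ξ ∈ Af, hitAt p (↑Af : Set ℤ) (j+1) x ξ
            * ∑ k ∈ Finset.range (N-j), convP p k (y - ξ) := by
    intro j _
    rw [Finset.sum_congr rfl (fun ξ _ => mul_sub _ _ _), Finset.sum_sub_distrib,
      Finset.sum_mul]
  rw [Finset.sum_congr rfl h3, Finset.sum_sub_distrib]
  linarith [E1]


end Bridge

/-! ### convolution limit lemma -/

lemma bounded_of_tendsto {b : ℕ → ℝ} {L : ℝ} (hb : Tendsto b atTop (𝓝 L)) :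
    ∃ B : ℝ, ∀ m, |b m| ≤ B := by
  obtain ⟨M, hM⟩ := (Metric.tendsto_atTop.mp hb) 1 one_pos
  refine ⟨(|L| + 1) + ∑ m ∈ Finset.range M, |b m|, fun m => ?_⟩
  have hsum : (0:ℝ) ≤ ∑ k ∈ Finset.range M, |b k| :=
    Finset.sum_nonneg fun k _ => abs_nonneg _
  by_cases hm : m < M
  · have h1 : |b m| ≤ ∑ k ∈ Finset.range M, |b k| :=
      Finset.single_le_sum (fun k _ => abs_nonneg (b k)) (Finset.mem_range.mpr hm)
    have : (0:ℝ) ≤ |L| + 1 := by positivity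
    linarith
  · have h1 := hM m (by omega)
    rw [Real.dist_eq] at h1
    have h2 : |b m| ≤ |L| + 1 := by
      have := abs_add_le (b m - L) L
      simp only [sub_add_cancel] at this
      linarith [abs_nonneg (b m - L)]
    linarith

lemma conv_tendsto {h : ℕ → ℝ} {b : ℕ → ℝ} {L : ℝ} (h0 : ∀ j, 0 ≤ h j) (hs : Summable h)
    (hb : Tendsto b atTop (𝓝 L)) :
    Tendsto (fun N : ℕ => ∑ j ∈ Finset.range (N+1), h j * b (N - j)) atTop
      (𝓝 ((∑' j : ℕ, h j) * L)) := by
  obtain ⟨B, hB⟩ := bounded_of_tendsto hb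
  have key : Tendsto (fun N : ℕ => ∑' j : ℕ, (if j ≤ N then h j * b (N - j) else 0)) atTop
      (𝓝 (∑' j : ℕ, h j * L)) := by
    apply tendsto_tsum_of_dominated_convergence (bound := fun j => h j * B) (hs.mul_right B)
    · intro j
      have h1 : Tendsto (fun N : ℕ => b (N - j)) atTop (𝓝 L) :=
        hb.comp (tendsto_sub_atTop_nat j)
      have h2 : Tendsto (fun N : ℕ => h j * b (N - j)) atTop (𝓝 (h j * L)) :=
        h1.const_mul _
      apply h2.congr'
      filter_upwards [eventually_ge_atTop j] with N hN
      rw [if_pos hN]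
    · filter_upwards with N
      intro j
      by_cases hj : j ≤ N
      · rw [if_pos hj]
        rw [Real.norm_eq_abs, abs_mul, abs_of_nonneg (h0 j)]
        exact mul_le_mul_of_nonneg_left (hB _) (h0 j)
      · rw [if_neg hj]
        simp only [norm_zero]
        have hB0 : 0 ≤ B := le_trans (abs_nonneg _) (hB 0)
        exact mul_nonneg (h0 j) hB0
  have hEq : ∀ N : ℕ, (∑' j : ℕ, (if j ≤ N then h j * b (N - j) else 0))
      = ∑ j ∈ Finset.range (N+1), h j * b (N - j) := by
    intro N
    rw [tsum_eq_sum (s := Finset.range (N+1))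
      (fun j hj => if_neg (fun hle => hj (Finset.mem_range.mpr (by omega))))]
    exact Finset.sum_congr rfl fun j hj =>
      if_pos (by have := Finset.mem_range.mp hj; omega)
  rw [← tsum_mul_right]
  exact key.congr hEq

end RWLem

open RWLem

/-- Lemma 2.1: the quantity `g_A(x,y) + a(x-y) - E_x[a(S_{σ_A} - y)]` does not depend on
`y`, and for `ξ0 ∈ A` it equals `a†(x-ξ0) - E_x[a(S_{σ_A} - ξ0)]`. -/
theorem green_potential_identity
    (W : RandomWalk) (A : Finset ℤ) (hA : A.Nonempty)
    (a : ℤ → ℝ) (ha : IsPotential W.p a) :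
    (∀ x y₁ y₂ : ℤ,
      greenFn W.p (↑A) x y₁ + a (x - y₁) - expHit W.p (↑A) a x y₁ =
        greenFn W.p (↑A) x y₂ + a (x - y₂) - expHit W.p (↑A) a x y₂) ∧
    (∀ ξ0 ∈ A, ∀ x y : ℤ,
      greenFn W.p (↑A) x y + a (x - y) - expHit W.p (↑A) a x y =
        adag a (x - ξ0) - expHit W.p (↑A) a x ξ0) := by
  
  classical
  have hp0 := W.nonneg
  have hp1 := W.sum_one
  have hirr := W.irred
  have hAset : (↑A : Set ℤ).Nonempty := by
    obtain ⟨ξ0, hξ0⟩ := hA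
    exact ⟨ξ0, Finset.mem_coe.mpr hξ0⟩
  have hexp : ∀ x y : ℤ, expHit W.p (↑A : Set ℤ) a x y
      = ∑ ξ ∈ A, hitDist W.p (↑A : Set ℤ) x ξ * a (ξ - y) := by
    intro x y
    apply tsum_eq_sum
    intro ξ hξ
    rw [hitDist_zero_of_not_mem (↑A : Set ℤ) x ξ (fun h => hξ (Finset.mem_coe.mp h)), zero_mul]
  have main : ∀ x y : ℤ, Tendsto (fun N : ℕ =>
      (∑ k ∈ Finset.range (N+1), convP W.p k 0)
        - ∑ j ∈ Finset.range (N+1), (∑ ξ ∈ A, hitAt W.p (↑A : Set ℤ) (j+1) x ξ)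
            * ∑ k ∈ Finset.range (N - j), convP W.p k 0)
      atTop (𝓝 (greenFn W.p (↑A : Set ℤ) x y + a (x - y) - expHit W.p (↑A : Set ℤ) a x y)) := by
    intro x y
    have l1 : Tendsto (fun N : ℕ => ∑ n ∈ Finset.range (N+1), kp W.p (↑A : Set ℤ) n x y)
        atTop (𝓝 (greenFn W.p (↑A : Set ℤ) x y)) := by
      have hsum := green_summable hp0 hp1 (↑A : Set ℤ) hAset hirr x y
      have h1 := hsum.hasSum.tendsto_sum_nat
      exact h1.comp (tendsto_add_atTop_nat 1)
    have l2 : Tendsto (fun N : ℕ =>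
        ∑ k ∈ Finset.range (N+1), (convP W.p k 0 - convP W.p k (-(x - y))))
        atTop (𝓝 (a (x - y))) := ha (x - y)
    have l3 : Tendsto (fun N : ℕ =>
        ∑ j ∈ Finset.range (N+1), ∑ ξ ∈ A, hitAt W.p (↑A : Set ℤ) (j+1) x ξ
          * (∑ k ∈ Finset.range (N - j), (convP W.p k 0 - convP W.p k (-(ξ - y)))))
        atTop (𝓝 (expHit W.p (↑A : Set ℤ) a x y)) := by
      have hper : ∀ ξ ∈ A, Tendsto (fun N : ℕ =>
          ∑ j ∈ Finset.range (N+1), hitAt W.p (↑A : Set ℤ) (j+1) x ξ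
            * (∑ k ∈ Finset.range (N - j), (convP W.p k 0 - convP W.p k (-(ξ - y)))))
          atTop (𝓝 (hitDist W.p (↑A : Set ℤ) x ξ * a (ξ - y))) := by
        intro ξ _
        have hsummable0 := summable_hitAt hp0 hp1 (↑A : Set ℤ) x ξ
        have hsummable : Summable (fun j : ℕ => hitAt W.p (↑A : Set ℤ) (j+1) x ξ) :=
          (summable_nat_add_iff 1).mpr hsummable0
        have hb : Tendsto (fun m : ℕ =>
            ∑ k ∈ Finset.range m, (convP W.p k 0 - convP W.p k (-(ξ - y))))
            atTop (𝓝 (a (ξ - y))) :=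
          (tendsto_add_atTop_iff_nat 1).mp (ha (ξ - y))
        have hct := conv_tendsto
          (fun j => hitAt_nonneg hp0 hp1 (↑A : Set ℤ) (j+1) x ξ) hsummable hb
        have htsum : (∑' j : ℕ, hitAt W.p (↑A : Set ℤ) (j+1) x ξ)
            = hitDist W.p (↑A : Set ℤ) x ξ := by
          have h0 := Summable.tsum_eq_zero_add hsummable0
          have hz : hitAt W.p (↑A : Set ℤ) 0 x ξ = 0 := rfl
          rw [hz, zero_add] at h0
          rw [hitDist, h0]
        rw [htsum] at hct
        exact hct
      have hfin := tendsto_finset_sum A hper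
      rw [hexp x y]
      exact hfin.congr fun N => (Finset.sum_comm).symm
    have lall := (l1.add l2).sub l3
    exact lall.congr fun N => DC hp0 hp1 A x y N
  constructor
  · intro x y₁ y₂
    exact tendsto_nhds_unique (main x y₁) (main x y₂)
  · intro ξ0 hξ0 x y
    have h1 := tendsto_nhds_unique (main x y) (main x ξ0)
    have hg : greenFn W.p (↑A : Set ℤ) x ξ0 = if x = ξ0 then 1 else 0 := by
      rw [greenFn, tsum_eq_single 0]
      · simp [kp]
      · intro n hn
        cases n with
        | zero => exact absurd rfl hn
        | succ n => exact kp_zero_of_mem hp0 hp1 (↑A : Set ℤ) n x ξ0 (Finset.mem_coe.mpr hξ0)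
    have hd : adag a (x - ξ0) = (if x = ξ0 then (1:ℝ) else 0) + a (x - ξ0) := by
      rw [adag]
      congr 1
      apply if_congr _ rfl rfl
      constructor
      · intro h; omega
      · intro h; omega
    rw [h1, hg, hd]
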